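/- Suppose that for every strongly independent set 𝒢 ⊆ Sym(Ω) of cardinality less than 2^{ℵ₀} and every pair of isomorphic inductively flexible structures M₁, M₂ with universe Ω there exists an isomorphism f : M₁ → M₂ with 𝒢 ∪ {f} strongly independent. Then there exists a proper dense subgroup G ≤ Sym(Ω) such that for any pair of isomorphic inductively flexible structures M, M′ with universe Ω, some f ∈ G is an isomorphism from M to M′. -/

import Mathlib

def StronglyIndependent {Ω : Type} (G : Set (Equiv.Perm Ω)) : Prop :=
  ∀ (n : ℕ) (w : FreeGroup (Fin (n + 1))), w ≠ 1 →
    ∀ f : Fin (n + 1) → Equiv.Perm Ω, Function.Injective f → (∀ i, f i ∈ G) →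
      {x : Ω | FreeGroup.lift f w x = x}.Finite

def FlexibleWitness {Ω : Type} (Aut : Set (Equiv.Perm Ω)) (F : Set (Set (Ω × Ω))) : Prop :=
  (∀ f ∈ F, Set.Finite f) ∧
  (∀ f ∈ F, ∃ g ∈ Aut, ∀ p ∈ f, g p.1 = p.2) ∧
  ∅ ∈ F ∧
  (∀ f ∈ F, Prod.swap '' f ∈ F) ∧
  (∀ f ∈ F, ∀ a : Ω, a ∉ Prod.fst '' f → {b : Ω | insert (a, b) f ∈ F}.Infinite)

/-- A relational structure on universe `Ω` with relation symbols indexed by `I` of arities `ar`. -/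
structure RelStruct (Ω I : Type) (ar : I → ℕ) where
  rel : ∀ i : I, (Fin (ar i) → Ω) → Prop

/-- `g` is an isomorphism from `M` to `N` (both with universe `Ω`), by transport of structure. -/
def IsIso {Ω I : Type} {ar : I → ℕ} (g : Equiv.Perm Ω) (M N : RelStruct Ω I ar) : Prop :=
  ∀ (i : I) (t : Fin (ar i) → Ω), N.rel i (fun k => g (t k)) ↔ M.rel i t

def InductivelyFlexible {Ω I : Type} {ar : I → ℕ} (M : RelStruct Ω I ar) : Prop :=
  ∃ F : Set (Set (Ω × Ω)), FlexibleWitness {g | IsIso g M M} F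

namespace Stmt11Aux

variable {Ω : Type}

theorem si_mono {G S : Set (Equiv.Perm Ω)} (h : StronglyIndependent G) (hs : S ⊆ G) :
    StronglyIndependent S :=
  fun n w hw f hf hmem => h n w hw f hf (fun i => hs (hmem i))

theorem exists_finitary_extend_finset (t : Finset (Ω × Ω)) :
    (∀ a b b', (a, b) ∈ t → (a, b') ∈ t → b = b') →
    (∀ a a' b, (a, b) ∈ t → (a', b) ∈ t → a = a') →
    ∃ g : Equiv.Perm Ω, {x | g x ≠ x}.Finite ∧ ∀ q ∈ t, g q.1 = q.2 := by
  classical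
  induction t using Finset.induction_on with
  | empty => exact fun _ _ => ⟨1, by simp, by simp⟩
  | @insert q s hq IH =>
      intro hfun hinj
      obtain ⟨a, b⟩ := q
      obtain ⟨g, hgfin, hg⟩ := IH
        (fun a b b' h1 h2 => hfun a b b' (Finset.mem_insert_of_mem h1) (Finset.mem_insert_of_mem h2))
        (fun a a' b h1 h2 => hinj a a' b (Finset.mem_insert_of_mem h1) (Finset.mem_insert_of_mem h2))
      have ha : ∀ y, (a, y) ∉ s := by
        intro y hy
        have hby : b = y := hfun a b y (Finset.mem_insert_self _ _) (Finset.mem_insert_of_mem hy)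
        exact hq (hby ▸ hy)
      have hb : ∀ x, (x, b) ∉ s := by
        intro x hx
        have hax : a = x := hinj a x b (Finset.mem_insert_self _ _) (Finset.mem_insert_of_mem hx)
        exact hq (hax ▸ hx)
      refine ⟨Equiv.swap (g a) b * g, ?_, ?_⟩
      · apply (hgfin.union ((Set.finite_singleton (g.symm b)).insert a)).subset
        intro x hx
        simp only [Set.mem_setOf_eq, Equiv.Perm.mul_apply] at hx
        by_cases hgx : g x = x
        · rw [hgx] at hx
          rcases eq_or_ne x (g a) with h1 | h1
          · have hxa : x = a := g.injective (hgx.trans h1)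
            exact Set.mem_union_right _ (Set.mem_insert_iff.mpr (Or.inl hxa))
          · rcases eq_or_ne x b with h2 | h2
            · have hxb : x = g.symm b := by
                apply g.injective
                rw [Equiv.apply_symm_apply, hgx, h2]
              exact Set.mem_union_right _ (Set.mem_insert_of_mem _ (by simp [hxb]))
            · exact absurd (Equiv.swap_apply_of_ne_of_ne h1 h2) hx
        · exact Set.mem_union_left _ hgx
      · rintro ⟨x, y⟩ hxy
        rcases Finset.mem_insert.mp hxy with h | h
        · rw [Prod.mk.injEq] at h
          obtain ⟨rfl, rfl⟩ := h
          simp [Equiv.Perm.mul_apply]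
        · have hgx : g x = y := hg (x, y) h
          have hy1 : y ≠ g a := by
            intro hy
            rw [← hgx, g.injective.eq_iff] at hy
            exact ha y (hy ▸ h)
          have hy2 : y ≠ b := fun hy => hb x (hy ▸ h)
          simp only [Equiv.Perm.mul_apply, hgx]
          exact Equiv.swap_apply_of_ne_of_ne hy1 hy2

theorem exists_finitary_extend (p : Set (Ω × Ω)) (hp : p.Finite)
    (hfun : ∀ a b b', (a, b) ∈ p → (a, b') ∈ p → b = b')
    (hinj : ∀ a a' b, (a, b) ∈ p → (a', b) ∈ p → a = a') :
    ∃ g : Equiv.Perm Ω, {x | g x ≠ x}.Finite ∧ ∀ q ∈ p, g q.1 = q.2 := by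
  classical
  obtain ⟨g, h1, h2⟩ := exists_finitary_extend_finset hp.toFinset
    (fun a b b' ha hb => hfun a b b' (hp.mem_toFinset.mp ha) (hp.mem_toFinset.mp hb))
    (fun a a' b ha hb => hinj a a' b (hp.mem_toFinset.mp ha) (hp.mem_toFinset.mp hb))
  exact ⟨g, h1, fun q hq => h2 q (hp.mem_toFinset.mpr hq)⟩

theorem exists_finitary_agree (h : Equiv.Perm Ω) (S : Finset Ω) :
    ∃ g : Equiv.Perm Ω, {x | g x ≠ x}.Finite ∧ ∀ a ∈ S, g a = h a := by
  classical
  obtain ⟨g, h1, h2⟩ := exists_finitary_extend_finset (S.image fun a => (a, h a))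
    (by
      intro a b b' h1 h2
      simp only [Finset.mem_image] at h1 h2
      obtain ⟨x, _, hx⟩ := h1
      obtain ⟨y, _, hy⟩ := h2
      rw [Prod.mk.injEq] at hx hy
      rw [← hx.2, ← hy.2, hx.1, hy.1])
    (by
      intro a a' b h1 h2
      simp only [Finset.mem_image] at h1 h2
      obtain ⟨x, _, hx⟩ := h1
      obtain ⟨y, _, hy⟩ := h2
      rw [Prod.mk.injEq] at hx hy
      rw [← hx.1, ← hy.1]
      apply h.injective
      rw [hx.2, hy.2])
  exact ⟨g, h1, fun a haS => h2 (a, h a) (Finset.mem_image_of_mem _ haS)⟩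

/-- The subgroup of finitary permutations. -/
def finSupp (Ω : Type) : Subgroup (Equiv.Perm Ω) where
  carrier := {g | {x | g x ≠ x}.Finite}
  one_mem' := by simp
  mul_mem' := by
    intro a b ha hb
    apply (ha.union hb).subset
    intro x hx
    by_cases h : b x = x
    · exact Set.mem_union_left _ (by simpa [Equiv.Perm.mul_apply, h] using hx)
    · exact Set.mem_union_right _ h
  inv_mem' := by
    intro a ha
    apply (Set.Finite.image a ha).subset
    intro x hx
    refine ⟨a⁻¹ x, ?_, by simp⟩
    show a (a⁻¹ x) ≠ a⁻¹ x
    rw [show a (a⁻¹ x) = x from a.apply_symm_apply x]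
    exact fun h => hx h.symm

instance finSupp_normal : (finSupp Ω).Normal := by
  constructor
  intro a ha g
  show {x | (g * a * g⁻¹) x ≠ x}.Finite
  have ha' : {x | a x ≠ x}.Finite := ha
  apply (ha'.image g).subset
  intro x hx
  simp only [Set.mem_setOf_eq, Equiv.Perm.mul_apply] at hx
  refine ⟨g⁻¹ x, ?_, by simp⟩
  intro h
  rw [h] at hx
  simp at hx

/-- a permutation with infinitely many fixed and infinitely many moved points -/
theorem exists_weird_perm [Countable Ω] [Infinite Ω] :
    ∃ h : Equiv.Perm Ω, {x | h x = x}.Infinite ∧ {x | h x ≠ x}.Infinite := by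
  have h1 : Cardinal.mk Ω = Cardinal.mk (ℤ ⊕ ℕ) := by
    rw [Cardinal.mk_eq_aleph0 Ω, Cardinal.mk_eq_aleph0 (ℤ ⊕ ℕ)]
  obtain ⟨e⟩ := Cardinal.eq.mp h1.symm
  let π : Equiv.Perm (ℤ ⊕ ℕ) := Equiv.sumCongr (Equiv.addRight (1 : ℤ)) (Equiv.refl ℕ)
  refine ⟨e.permCongr π, ?_, ?_⟩
  · have hinf : (Set.range (fun n : ℕ => e (Sum.inr n))).Infinite := by
      apply Set.infinite_range_of_injective
      intro m n hmn
      simpa using e.injective hmn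
    apply hinf.mono
    rintro x ⟨n, rfl⟩
    simp [Equiv.permCongr_apply, π]
  · have hinf : (Set.range (fun z : ℤ => e (Sum.inl z))).Infinite := by
      apply Set.infinite_range_of_injective
      intro m n hmn
      simpa using e.injective hmn
    apply hinf.mono
    rintro x ⟨z, rfl⟩
    simp only [Set.mem_setOf_eq, Equiv.permCongr_apply, Equiv.symm_apply_apply]
    intro hc
    have := e.injective hc
    simp [π] at this

/-- The trivial structure, with empty signature. -/
def trivRel (Ω : Type) : RelStruct Ω Empty (fun _ => 0) := ⟨fun i => i.elim⟩

theorem isIso_trivRel (g : Equiv.Perm Ω) : IsIso g (trivRel Ω) (trivRel Ω) := fun i => i.elim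

theorem trivRel_flexible [Infinite Ω] : InductivelyFlexible (trivRel Ω) := by
  classical
  refine ⟨{p | p.Finite ∧ (∀ a b b', (a, b) ∈ p → (a, b') ∈ p → b = b') ∧
      (∀ a a' b, (a, b) ∈ p → (a', b) ∈ p → a = a')}, ?_, ?_, ?_, ?_, ?_⟩
  · exact fun f hf => hf.1
  · rintro f ⟨h1, h2, h3⟩
    obtain ⟨g, -, hg⟩ := exists_finitary_extend f h1 h2 h3
    exact ⟨g, isIso_trivRel g, hg⟩
  · exact ⟨Set.finite_empty, by simp, by simp⟩
  · rintro f ⟨h1, h2, h3⟩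
    refine ⟨h1.image _, ?_, ?_⟩
    · intro a b b' hab hab'
      simp only [Set.mem_image] at hab hab'
      obtain ⟨⟨x, y⟩, hxy, hxy'⟩ := hab
      obtain ⟨⟨x', y'⟩, hxy2, hxy2'⟩ := hab'
      simp only [Prod.swap_prod_mk, Prod.mk.injEq] at hxy' hxy2'
      obtain ⟨rfl, rfl⟩ := hxy'
      obtain ⟨rfl, rfl⟩ := hxy2'
      exact h3 _ _ _ hxy hxy2
    · intro a a' b hab hab'
      simp only [Set.mem_image] at hab hab'
      obtain ⟨⟨x, y⟩, hxy, hxy'⟩ := hab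
      obtain ⟨⟨x', y'⟩, hxy2, hxy2'⟩ := hab'
      simp only [Prod.swap_prod_mk, Prod.mk.injEq] at hxy' hxy2'
      obtain ⟨rfl, rfl⟩ := hxy'
      obtain ⟨rfl, rfl⟩ := hxy2'
      exact h2 _ _ _ hxy hxy2
  · rintro f ⟨h1, h2, h3⟩ a ha
    apply Set.Infinite.mono (s := (Prod.snd '' f)ᶜ)
    · intro b hb
      simp only [Set.mem_compl_iff, Set.mem_image] at hb
      push_neg at hb
      refine ⟨h1.insert _, ?_, ?_⟩
      · rintro x y y' hxy hxy'
        rcases Set.mem_insert_iff.mp hxy with h | h <;>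
          rcases Set.mem_insert_iff.mp hxy' with h' | h'
        · rw [Prod.mk.injEq] at h h'
          rw [h.2, h'.2]
        · rw [Prod.mk.injEq] at h
          exfalso
          exact ha ⟨(x, y'), h', by simp [h.1]⟩
        · rw [Prod.mk.injEq] at h'
          exfalso
          exact ha ⟨(x, y), h, by simp [h'.1]⟩
        · exact h2 _ _ _ h h'
      · rintro x x' y hxy hxy'
        rcases Set.mem_insert_iff.mp hxy with h | h <;>
          rcases Set.mem_insert_iff.mp hxy' with h' | h'
        · rw [Prod.mk.injEq] at h h'
          rw [h.1, h'.1]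
        · rw [Prod.mk.injEq] at h
          exact absurd h.2 (hb (x', y) h')
        · rw [Prod.mk.injEq] at h'
          exact absurd h'.2 (hb (x, y) h)
        · exact h3 _ _ _ h h'
    · exact Set.Finite.infinite_compl (h1.image _)

/-- The collection of isomorphism-sets of pairs of inductively flexible structures. -/
def IsoSets (Ω : Type) : Set (Set (Equiv.Perm Ω)) :=
  {S | ∃ (I : Type) (ar : I → ℕ) (M M' : RelStruct Ω I ar),
    InductivelyFlexible M ∧ InductivelyFlexible M' ∧ (∃ g : Equiv.Perm Ω, IsIso g M M') ∧
    S = {g | IsIso g M M'}}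

theorem univ_mem_isoSets [Infinite Ω] : Set.univ ∈ IsoSets Ω := by
  refine ⟨Empty, fun _ => 0, trivRel Ω, trivRel Ω, trivRel_flexible, trivRel_flexible,
    ⟨1, isIso_trivRel 1⟩, ?_⟩
  ext g
  simp [isIso_trivRel g]

/-- Coding of an isomorphism set by the finite partial maps it realizes. -/
def isoCode (S : Set (Equiv.Perm Ω)) : Set (Finset (Ω × Ω)) :=
  {p | ∃ s ∈ S, ∀ q ∈ p, s q.1 = q.2}

theorem subset_of_isoCode_subset {S : Set (Equiv.Perm Ω)} {J : Type} {br : J → ℕ}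
    {N N' : RelStruct Ω J br} (h : isoCode S ⊆ isoCode {g | IsIso g N N'}) :
    S ⊆ {g | IsIso g N N'} := by
  classical
  intro g hg i t
  have hp : (Finset.univ.image fun k => (t k, g (t k))) ∈ isoCode S := by
    refine ⟨g, hg, ?_⟩
    intro q hq
    simp only [Finset.mem_image, Finset.mem_univ, true_and] at hq
    obtain ⟨k, rfl⟩ := hq
    rfl
  obtain ⟨s, hs, hsp⟩ := h hp
  have hgs : (fun k => g (t k)) = fun k => s (t k) := by
    funext k
    exact (hsp (t k, g (t k)) (Finset.mem_image_of_mem _ (Finset.mem_univ k))).symm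
  rw [hgs]
  exact hs i t

theorem isoCode_injOn : Set.InjOn (isoCode (Ω := Ω)) (IsoSets Ω) := by
  rintro S ⟨I, ar, M, M', _, _, _, rfl⟩ T ⟨J, br, N, N', _, _, _, rfl⟩ hcode
  apply Set.Subset.antisymm
  · exact subset_of_isoCode_subset hcode.le
  · exact subset_of_isoCode_subset hcode.ge

theorem mk_isoSets_le [Countable Ω] : Cardinal.mk (IsoSets Ω) ≤ Cardinal.continuum := by
  have hinj : Function.Injective (fun S : IsoSets Ω => isoCode S.1) := by
    intro S T hST
    exact Subtype.ext (isoCode_injOn S.2 T.2 hST)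
  calc Cardinal.mk (IsoSets Ω) ≤ Cardinal.mk (Set (Finset (Ω × Ω))) :=
        Cardinal.mk_le_of_injective hinj
    _ = 2 ^ Cardinal.mk (Finset (Ω × Ω)) := Cardinal.mk_set
    _ ≤ 2 ^ Cardinal.aleph0 := by
        apply Cardinal.power_le_power_left two_ne_zero
        exact Cardinal.mk_le_aleph0
    _ = Cardinal.continuum := Cardinal.two_power_aleph0

theorem si_fix_finite {𝒢 : Set (Equiv.Perm Ω)} (hsi : StronglyIndependent 𝒢) {m : ℕ}
    (hm : m ≠ 0) (f : Fin m → Equiv.Perm Ω) (hfinj : Function.Injective f)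
    (hfmem : ∀ i, f i ∈ 𝒢) (ω : FreeGroup (Fin m)) (hω1 : ω ≠ 1) :
    {x | FreeGroup.lift f ω x = x}.Finite := by
  obtain ⟨n, rfl⟩ := Nat.exists_eq_succ_of_ne_zero hm
  exact hsi n ω hω1 f hfinj hfmem

theorem closure_word {𝒢 : Set (Equiv.Perm Ω)} (hsi : StronglyIndependent 𝒢) :
    ∀ w ∈ Subgroup.closure 𝒢, w = 1 ∨ {x | w x = x}.Finite := by
  classical
  intro w hw
  have hw' : w ∈ Submonoid.closure (𝒢 ∪ 𝒢⁻¹) := by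
    rw [← Subgroup.closure_toSubmonoid]
    exact hw
  obtain ⟨l, hl, hlprod⟩ := Submonoid.exists_list_of_mem_closure hw'
  set φ : Equiv.Perm Ω → Equiv.Perm Ω := fun y => if y ∈ 𝒢 then y else y⁻¹ with hφ
  set s' : Finset (Equiv.Perm Ω) := l.toFinset.image φ with hs'
  have hs'sub : ∀ z ∈ s', z ∈ 𝒢 := by
    intro z hz
    simp only [hs', Finset.mem_image, List.mem_toFinset] at hz
    obtain ⟨y, hy, rfl⟩ := hz
    rcases hl y hy with h | h
    · simp [hφ, h]
    · by_cases h2 : y ∈ 𝒢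
      · simp [hφ, h2]
      · simpa [hφ, h2] using h
  set m := s'.card with hm
  set ee : Fin m ≃ {z // z ∈ s'} := s'.equivFin.symm with hee
  set f : Fin m → Equiv.Perm Ω := fun i => (ee i : Equiv.Perm Ω) with hfdef
  have hfinj : Function.Injective f := by
    intro i j hij
    exact ee.injective (Subtype.ext hij)
  have hfmem : ∀ i, f i ∈ 𝒢 := fun i => hs'sub _ (ee i).2
  have hlift : ∀ y ∈ l, ∃ ω : FreeGroup (Fin m), FreeGroup.lift f ω = y := by
    intro y hy
    by_cases h2 : y ∈ 𝒢
    · have hys : y ∈ s' := by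
        simp only [hs', Finset.mem_image]
        exact ⟨y, List.mem_toFinset.mpr hy, by simp [hφ, h2]⟩
      refine ⟨FreeGroup.of (ee.symm ⟨y, hys⟩), ?_⟩
      simp [hfdef, FreeGroup.lift_apply_of]
    · have hyinv : y⁻¹ ∈ 𝒢 := by
        rcases hl y hy with h | h
        · exact absurd h h2
        · simpa using h
      have hys : y⁻¹ ∈ s' := by
        simp only [hs', Finset.mem_image]
        exact ⟨y, List.mem_toFinset.mpr hy, by simp [hφ, h2]⟩
      refine ⟨(FreeGroup.of (ee.symm ⟨y⁻¹, hys⟩))⁻¹, ?_⟩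
      simp [hfdef, FreeGroup.lift_apply_of]
  have hlistlift : ∀ l' : List (Equiv.Perm Ω), (∀ y ∈ l', ∃ ω : FreeGroup (Fin m),
      FreeGroup.lift f ω = y) → ∃ ω : FreeGroup (Fin m), FreeGroup.lift f ω = l'.prod := by
    intro l' hl'
    induction l' with
    | nil => exact ⟨1, by simp⟩
    | cons y t IH =>
        obtain ⟨ωy, hωy⟩ := hl' y List.mem_cons_self
        obtain ⟨ωt, hωt⟩ := IH (fun z hz => hl' z (List.mem_cons_of_mem _ hz))
        exact ⟨ωy * ωt, by simp [map_mul, hωy, hωt]⟩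
  obtain ⟨ω, hω⟩ := hlistlift l hlift
  rw [hlprod] at hω
  by_cases hω1 : ω = 1
  · left
    rw [← hω, hω1, map_one]
  · right
    rcases Nat.eq_zero_or_pos m with hm0 | hmpos
    · exfalso
      apply hω1
      have : IsEmpty (Fin m) := by rw [hm0]; infer_instance
      exact Subsingleton.elim ω 1
    · have hfix := si_fix_finite hsi (Nat.pos_iff_ne_zero.mp hmpos) f hfinj hfmem ω hω1
      rw [hω] at hfix
      exact hfix

/-- predecessor images for a transfinite recursion -/
def prevSet {ι α : Type} [LT ι] (F : ι → α) (i : ι) : Set α :=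
  Set.range (fun j : {j : ι // j < i} => F j.1)

theorem prevSet_eq {ι α : Type} [LT ι] (F : ι → α) (i : ι) :
    prevSet F i = F '' {j | j < i} := by
  ext y
  constructor
  · rintro ⟨⟨j, hj⟩, rfl⟩
    exact ⟨j, hj, rfl⟩
  · rintro ⟨j, hj, rfl⟩
    exact ⟨⟨j, hj⟩, rfl⟩

end Stmt11Aux

theorem stmt_11 (Ω : Type) [Countable Ω] [Infinite Ω]
    (H : ∀ (I : Type) (ar : I → ℕ) (𝒢 : Set (Equiv.Perm Ω)), StronglyIndependent 𝒢 →
      Cardinal.mk ↥𝒢 < Cardinal.continuum →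
      ∀ M₁ M₂ : RelStruct Ω I ar, InductivelyFlexible M₁ → InductivelyFlexible M₂ →
        (∃ g : Equiv.Perm Ω, IsIso g M₁ M₂) →
        ∃ f : Equiv.Perm Ω, IsIso f M₁ M₂ ∧ StronglyIndependent (insert f 𝒢)) :
    ∃ G : Subgroup (Equiv.Perm Ω), G ≠ ⊤ ∧
      (∀ h : Equiv.Perm Ω, ∀ S : Finset Ω, ∃ g ∈ G, ∀ a ∈ S, g a = h a) ∧
      ∀ (I : Type) (ar : I → ℕ) (M M' : RelStruct Ω I ar),
        InductivelyFlexible M → InductivelyFlexible M' →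
        (∃ g : Equiv.Perm Ω, IsIso g M M') → ∃ f ∈ G, IsIso f M M' := by
  classical
  have pick : ∀ (𝒢 S : Set (Equiv.Perm Ω)), S ∈ Stmt11Aux.IsoSets Ω → StronglyIndependent 𝒢 →
      Cardinal.mk ↥𝒢 < Cardinal.continuum →
      ∃ f : Equiv.Perm Ω, f ∈ S ∧ StronglyIndependent (insert f 𝒢) := by
    rintro 𝒢 S ⟨I, ar, M, M', hM, hM', hex, rfl⟩ h1 h2
    obtain ⟨f, hf1, hf2⟩ := H I ar 𝒢 h1 h2 M M' hM hM' hex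
    exact ⟨f, hf1, hf2⟩
  choose pickF pickF_mem pickF_si using pick
  haveI hSne : Nonempty (Stmt11Aux.IsoSets Ω) := ⟨⟨Set.univ, Stmt11Aux.univ_mem_isoSets⟩⟩
  have wfι : WellFounded ((· < ·) : Cardinal.continuum.{0}.ord.ToType → Cardinal.continuum.{0}.ord.ToType → Prop) :=
    IsWellFounded.wf
  have hcard : Cardinal.mk (Stmt11Aux.IsoSets Ω) ≤ Cardinal.mk Cardinal.continuum.{0}.ord.ToType := by
    rw [Cardinal.mk_toType, Cardinal.card_ord]
    exact Stmt11Aux.mk_isoSets_le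
  obtain ⟨emb⟩ := Cardinal.le_def _ _ |>.mp hcard
  set e : Cardinal.continuum.{0}.ord.ToType → Stmt11Aux.IsoSets Ω := Function.invFun emb with he_def
  have he : Function.Surjective e := Function.invFun_surjective emb.injective
  obtain ⟨F, hF⟩ : ∃ F : Cardinal.continuum.{0}.ord.ToType → Equiv.Perm Ω,
      ∀ i, F i = if h : StronglyIndependent (Stmt11Aux.prevSet F i) ∧
          Cardinal.mk (Stmt11Aux.prevSet F i) < Cardinal.continuum
        then pickF (Stmt11Aux.prevSet F i) (e i).1 (e i).2 h.1 h.2 else 1 := by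
    refine ⟨wfι.fix (fun i IH =>
      if h : StronglyIndependent (Set.range fun j : {j // j < i} => IH j.1 j.2) ∧
          Cardinal.mk (Set.range fun j : {j // j < i} => IH j.1 j.2) < Cardinal.continuum
        then pickF _ (e i).1 (e i).2 h.1 h.2 else 1), fun i => ?_⟩
    rw [wfι.fix_eq]
    rfl
  have hcardprev : ∀ i, Cardinal.mk (F '' {j | j < i}) < Cardinal.continuum := by
    intro i
    have h1 := Ordinal.typein_lt_self (o := Cardinal.continuum.{0}.ord) i
    rw [Cardinal.lt_ord] at h1
    have h2 : Cardinal.mk {j // j < i} =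
        (@Ordinal.typein Cardinal.continuum.{0}.ord.ToType (· < ·) isWellOrder_lt i).card :=
      @Ordinal.card_typein Cardinal.continuum.{0}.ord.ToType (· < ·) isWellOrder_lt i
    calc Cardinal.mk (F '' {j | j < i}) ≤ Cardinal.mk {j // j < i} := Cardinal.mk_image_le
      _ < Cardinal.continuum := by rw [h2]; exact h1
  have main : ∀ i, StronglyIndependent (F '' {j | j ≤ i}) ∧ F i ∈ (e i).1 := by
    intro i
    apply wfι.induction
      (C := fun i => StronglyIndependent (F '' {j | j ≤ i}) ∧ F i ∈ (e i).1) i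
    intro x IH
    have hlt : StronglyIndependent (F '' {j | j < x}) := by
      intro n w hw f hfinj hfmem
      choose jf hjlt hjF using fun k => hfmem k
      have hne : (Finset.univ.image jf).Nonempty :=
        ⟨jf 0, Finset.mem_image_of_mem _ (Finset.mem_univ 0)⟩
      have hjmlt : (Finset.univ.image jf).max' hne < x := by
        obtain ⟨k, -, hk⟩ := Finset.mem_image.mp ((Finset.univ.image jf).max'_mem hne)
        rw [← hk]; exact hjlt k
      apply (IH _ hjmlt).1 n w hw f hfinj
      intro k
      refine ⟨jf k, ?_, hjF k⟩
      show jf k ≤ _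
      exact Finset.le_max' _ _ (Finset.mem_image_of_mem _ (Finset.mem_univ k))
    have hstep := hF x
    rw [Stmt11Aux.prevSet_eq] at hstep
    rw [dif_pos ⟨hlt, hcardprev x⟩] at hstep
    constructor
    · have hsi := pickF_si (F '' {j | j < x}) (e x).1 (e x).2 hlt (hcardprev x)
      rw [← hstep] at hsi
      apply Stmt11Aux.si_mono hsi
      rintro y ⟨j, hj, rfl⟩
      rcases lt_or_eq_of_le (show j ≤ x from hj) with h | h
      · exact Set.mem_insert_of_mem _ ⟨j, h, rfl⟩
      · rw [h]; exact Set.mem_insert _ _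
    · rw [hstep]
      exact pickF_mem _ _ _ _ _
  have hSIrange : StronglyIndependent (Set.range F) := by
    intro n w hw f hfinj hfmem
    choose jf hjF using fun k => hfmem k
    have hne : (Finset.univ.image jf).Nonempty :=
      ⟨jf 0, Finset.mem_image_of_mem _ (Finset.mem_univ 0)⟩
    apply (main ((Finset.univ.image jf).max' hne)).1 n w hw f hfinj
    intro k
    refine ⟨jf k, ?_, hjF k⟩
    show jf k ≤ _
    exact Finset.le_max' _ _ (Finset.mem_image_of_mem _ (Finset.mem_univ k))
  have hmeet : ∀ S ∈ Stmt11Aux.IsoSets Ω, ∃ f ∈ Set.range F, f ∈ S := by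
    intro S hS
    obtain ⟨i, hi⟩ := he ⟨S, hS⟩
    refine ⟨F i, ⟨i, rfl⟩, ?_⟩
    have h2 := (main i).2
    rw [hi] at h2
    exact h2
  refine ⟨Subgroup.closure (Set.range F ∪ ↑(Stmt11Aux.finSupp Ω)), ?_, ?_, ?_⟩
  · intro htop
    obtain ⟨h₀, hfix, hsupp⟩ := Stmt11Aux.exists_weird_perm (Ω := Ω)
    have hmem : h₀ ∈ Subgroup.closure (Set.range F ∪ ↑(Stmt11Aux.finSupp Ω)) := by
      rw [htop]; trivial
    rw [Subgroup.closure_union, Subgroup.closure_eq] at hmem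
    have hmem' : h₀ ∈ (↑(Subgroup.closure (Set.range F) ⊔ Stmt11Aux.finSupp Ω) :
        Set (Equiv.Perm Ω)) := hmem
    rw [Subgroup.mul_normal] at hmem'
    obtain ⟨w, hw, σ, hσ, hwσ⟩ := hmem'
    have hσfin : {x | σ x ≠ x}.Finite := hσ
    rcases Stmt11Aux.closure_word hSIrange w hw with h1 | h1
    · have hσh : σ = h₀ := by rw [h1] at hwσ; simpa using hwσ
      rw [← hσh] at hsupp
      exact hsupp hσfin
    · apply hfix
      apply (h1.union hσfin).subset
      intro x hx
      simp only [Set.mem_setOf_eq] at hx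
      by_cases hσx : σ x = x
      · left
        show w x = x
        rw [← hwσ] at hx
        simpa [Equiv.Perm.mul_apply, hσx] using hx
      · exact Or.inr hσx
  · intro h S
    obtain ⟨g, hgfin, hg⟩ := Stmt11Aux.exists_finitary_agree h S
    exact ⟨g, Subgroup.subset_closure (Or.inr hgfin), hg⟩
  · intro I ar M M' hM hM' hex
    have hS : {g : Equiv.Perm Ω | IsIso g M M'} ∈ Stmt11Aux.IsoSets Ω :=
      ⟨I, ar, M, M', hM, hM', hex, rfl⟩
    obtain ⟨f, hf1, hf2⟩ := hmeet _ hS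
    exact ⟨f, Subgroup.subset_closure (Or.inl hf1), hf2⟩
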